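/- Let N ≥ 3 be odd and φ ∈ ℝ^N. The number of local minima of F_φ (with θ_N = 0 fixed) whose coordinates θ_1,…,θ_{N−1} lie in the fundamental domain (−π, π] is at most N. -/

import Mathlib

open Real Filter

/-- The variable `s k = φ k + θ (k+1) - θ k` (indices cyclic mod `N`,
0-based; paper index `k` corresponds to `k-1` here, so `s_N` is `sVar` at `lastIdx`). -/
noncomputable def sVar (N : ℕ) (hN : 0 < N) (φ θ : Fin N → ℝ) (k : Fin N) : ℝ :=
  φ k + θ ⟨((k : ℕ) + 1) % N, Nat.mod_lt _ hN⟩ - θ k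

/-- The lattice Landau gauge functional / random phase XY Hamiltonian
`F_φ(θ) = Σ_k (1 - cos(φ_k + θ_{k+1} - θ_k))` with periodic boundary conditions. -/
noncomputable def Fxy (N : ℕ) (hN : 0 < N) (φ θ : Fin N → ℝ) : ℝ :=
  ∑ k : Fin N, (1 - Real.cos (sVar N hN φ θ k))

/-- The index of the fixed site (paper site `N`). -/
def lastIdx (N : ℕ) (hN : 0 < N) : Fin N :=
  ⟨N - 1, Nat.sub_lt hN Nat.one_pos⟩

/-- `θ` is a stationary point of `F_φ` regarded as a function of the free
coordinates `θ_1, …, θ_{N-1}` (0-based: coordinates `k` with `k < N-1`),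
with `θ` at `lastIdx` held fixed: all partial derivatives vanish. -/
noncomputable def IsStationaryPt (N : ℕ) (hN : 0 < N) (φ θ : Fin N → ℝ) : Prop :=
  ∀ k : Fin N, (k : ℕ) < N - 1 →
    deriv (fun t : ℝ => Fxy N hN φ (Function.update θ k t)) (θ k) = 0

/-- The `(N-1) × (N-1)` tridiagonal matrix with entries
`δ_{ij}(c_{i-1} + c_i) - δ_{i-1,j} c_{i-1} - δ_{i+1,j} c_i`, where indices are
0-based (paper index `i` ↦ `i-1`) and `c_0 := c_N` (cyclic predecessor). -/
noncomputable def hessC (N : ℕ) (hN : 0 < N) (c : Fin N → ℝ) :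
    Matrix (Fin (N - 1)) (Fin (N - 1)) ℝ :=
  Matrix.of fun i j =>
    (if i = j then
        c ⟨((i : ℕ) + (N - 1)) % N, Nat.mod_lt _ hN⟩ +
          c ⟨(i : ℕ), lt_of_lt_of_le i.isLt (Nat.sub_le N 1)⟩
      else 0)
    - (if (i : ℕ) = (j : ℕ) + 1 then c ⟨((i : ℕ) + (N - 1)) % N, Nat.mod_lt _ hN⟩ else 0)
    - (if (j : ℕ) = (i : ℕ) + 1 then c ⟨(i : ℕ), lt_of_lt_of_le i.isLt (Nat.sub_le N 1)⟩ else 0)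

/-- The Hessian of `F_φ` (with the last coordinate fixed) at a configuration `θ`. -/
noncomputable def hessAt (N : ℕ) (hN : 0 < N) (φ θ : Fin N → ℝ) :
    Matrix (Fin (N - 1)) (Fin (N - 1)) ℝ :=
  hessC N hN fun k => Real.cos (sVar N hN φ θ k)

/-- `F_φ` as a function of the free coordinates only: the coordinate at
`lastIdx` is overwritten by `0`. -/
noncomputable def FxyFixed (N : ℕ) (hN : 0 < N) (φ : Fin N → ℝ) (η : Fin N → ℝ) : ℝ :=
  Fxy N hN φ (Function.update η (lastIdx N hN) 0)

/-- The value `σ = (Φ + 2πl - π Σ_{k=1}^{N-1} q_k) / (1 + Σ_{k=1}^{N-1} (-1)^{q_k})`. -/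
noncomputable def sigmaVal (N : ℕ) (hN : 0 < N) (φ : Fin N → ℝ) (q : Fin N → ℕ) (l : ℤ) : ℝ :=
  ((∑ k, φ k) + 2 * Real.pi * (l : ℝ)
      - Real.pi * ∑ k ∈ Finset.univ.erase (lastIdx N hN), (q k : ℝ)) /
    (1 + ∑ k ∈ Finset.univ.erase (lastIdx N hN), (-1 : ℝ) ^ (q k))

open Topology

section StmtFive

variable {N : ℕ} [NeZero N]


lemma fin_mk_succ (hN3 : 3 ≤ N) (k : Fin N) {h : ((k:ℕ)+1) % N < N} :
    (⟨((k : ℕ) + 1) % N, h⟩ : Fin N) = k + 1 := by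
  ext
  rw [Fin.add_def, Fin.val_one', Nat.mod_eq_of_lt (show (1:ℕ) < N by omega)]

lemma sVar_apply (hN3 : 3 ≤ N) (hN : 0 < N) (φ θ : Fin N → ℝ) (k : Fin N) :
    sVar N hN φ θ k = φ k + θ (k + 1) - θ k := by
  rw [sVar, fin_mk_succ hN3]

lemma lastIdx_add_one (hN3 : 3 ≤ N) (hN : 0 < N) :
    lastIdx N hN + 1 = 0 := by
  ext
  rw [Fin.add_def, Fin.val_one']
  simp only [lastIdx, Fin.val_zero]
  rw [Nat.mod_eq_of_lt (show (1:ℕ) < N by omega)]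
  have : N - 1 + 1 = N := by omega
  rw [this, Nat.mod_self]

lemma fin_mk_add_one (hN3 : 3 ≤ N) {j : ℕ} (hj : j + 1 < N) :
    (⟨j, by omega⟩ : Fin N) + 1 = ⟨j + 1, hj⟩ := by
  ext
  rw [Fin.add_def, Fin.val_one', Nat.mod_eq_of_lt (show (1:ℕ) < N by omega)]
  exact Nat.mod_eq_of_lt hj

/-- realize any mean-zero `Δ` as the "gradient" of a potential `v` vanishing at `lastIdx`. -/
lemma exists_v (hN3 : 3 ≤ N) (hN : 0 < N) (Δ : Fin N → ℝ) (hΔ : ∑ k, Δ k = 0) :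
    ∃ v : Fin N → ℝ, v (lastIdx N hN) = 0 ∧ ∀ k, v (k + 1) - v k = Δ k := by
  set Δ' : ℕ → ℝ := fun k => Δ ⟨k % N, Nat.mod_lt _ hN⟩ with hΔ'
  have hΔ'eq : ∀ k : Fin N, Δ' (k : ℕ) = Δ k := by
    intro k; simp only [hΔ']; congr 1; ext; simp [Nat.mod_eq_of_lt k.isLt]
  refine ⟨fun j => -∑ k ∈ Finset.Ico (j : ℕ) (N - 1), Δ' k, ?_, ?_⟩
  · simp [lastIdx]
  · have hsum : ∑ k ∈ Finset.Ico 0 (N - 1), Δ' k = -Δ' (N - 1) := by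
      have h1 : ∑ k ∈ Finset.Ico 0 N, Δ' k = 0 := by
        rw [← Finset.range_eq_Ico, ← Fin.sum_univ_eq_sum_range Δ' N]
        rw [Finset.sum_congr rfl fun k _ => hΔ'eq k]
        exact hΔ
      have h2 : ∑ k ∈ Finset.Ico 0 (N - 1 + 1), Δ' k
          = (∑ k ∈ Finset.Ico 0 (N - 1), Δ' k) + Δ' (N - 1) :=
        Finset.sum_Ico_succ_top (by omega) _
      rw [show N - 1 + 1 = N from by omega] at h2
      rw [h2] at h1; linarith
    intro k
    rcases lt_or_ge ((k : ℕ)) (N - 1) with hk | hk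
    · have hk1 : (k : ℕ) + 1 < N := by omega
      have hval : ((k + 1 : Fin N) : ℕ) = (k : ℕ) + 1 := by
        rw [Fin.add_def, Fin.val_one', Nat.mod_eq_of_lt (show (1:ℕ) < N by omega)]
        exact Nat.mod_eq_of_lt hk1
      simp only [hval]
      rw [Finset.sum_eq_sum_Ico_succ_bot (show (k:ℕ) < N - 1 from hk) Δ']
      rw [hΔ'eq k]
      ring
    · have hkl : k = lastIdx N hN := by
        ext; simp only [lastIdx]; omega
      rw [hkl, lastIdx_add_one hN3]
      simp only [Fin.val_zero, lastIdx]
      rw [hsum]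
      have : Δ' (N - 1) = Δ (lastIdx N hN) := by
        simp only [hΔ', lastIdx]; congr 1; ext
        exact Nat.mod_eq_of_lt (by omega)
      rw [this]
      simp [lastIdx]


lemma quad_ineq (hN3 : 3 ≤ N) (hN : 0 < N) (φ θ : Fin N → ℝ)
    (h0 : θ (lastIdx N hN) = 0)
    (hmin : IsLocalMin (FxyFixed N hN φ) θ)
    (v : Fin N → ℝ) (hv : v (lastIdx N hN) = 0) :
    (∑ k : Fin N, Real.sin (sVar N hN φ θ k) * (v (k + 1) - v k) = 0) ∧
    0 ≤ ∑ k : Fin N, Real.cos (sVar N hN φ θ k) * (v (k + 1) - v k) * (v (k + 1) - v k) := by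
  set s : Fin N → ℝ := fun k => sVar N hN φ θ k with hs
  set d : Fin N → ℝ := fun k => v (k + 1) - v k with hd
  set g : ℝ → ℝ := fun t => ∑ k : Fin N, (1 - Real.cos (s k + t * d k)) with hg
  set g1 : ℝ → ℝ := fun t => ∑ k : Fin N, Real.sin (s k + t * d k) * d k with hg1
  -- `g t` is the functional along the segment
  have hgF : ∀ t : ℝ, FxyFixed N hN φ (θ + t • v) = g t := by
    intro t
    have hval : (θ + t • v) (lastIdx N hN) = 0 := by simp [h0, hv]
    have hup : Function.update (θ + t • v) (lastIdx N hN) 0 = θ + t • v := by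
      rw [← hval, Function.update_eq_self]
    rw [FxyFixed, hup, Fxy]
    refine Finset.sum_congr rfl fun k _ => ?_
    have harg : sVar N hN φ (θ + t • v) k = s k + t * d k := by
      rw [sVar_apply hN3, hs]
      simp only [Pi.add_apply, Pi.smul_apply, smul_eq_mul, sVar_apply hN3 hN φ θ k, hd]
      ring
    rw [harg]
  -- local minimality of `g` at `0`
  have hglocal : IsLocalMin g 0 := by
    have hc : Continuous fun t : ℝ => θ + t • v := by continuity
    have ht : Tendsto (fun t : ℝ => θ + t • v) (𝓝 0) (𝓝 θ) := by
      have h := hc.tendsto 0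
      simpa using h
    have hev := ht.eventually hmin
    have hθ : FxyFixed N hN φ θ = g 0 := by
      have := hgF 0
      simpa using this
    filter_upwards [hev] with t htt
    rw [← hgF t, ← hθ]
    exact htt
  -- derivatives
  have hDg : ∀ t : ℝ, HasDerivAt g (g1 t) t := by
    intro t
    refine HasDerivAt.fun_sum fun k _ => ?_
    have h1 : HasDerivAt (fun t : ℝ => s k + t * d k) (d k) t := by
      simpa using ((hasDerivAt_id t).mul_const (d k)).const_add (s k)
    have h2 := (Real.hasDerivAt_cos (s k + t * d k)).comp t h1
    have h3 := h2.const_sub 1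
    simpa [neg_mul] using h3
  have hDg1 : ∀ t : ℝ, HasDerivAt g1 (∑ k : Fin N, Real.cos (s k + t * d k) * d k * d k) t := by
    intro t
    refine HasDerivAt.fun_sum fun k _ => ?_
    have h1 : HasDerivAt (fun t : ℝ => s k + t * d k) (d k) t := by
      simpa using ((hasDerivAt_id t).mul_const (d k)).const_add (s k)
    have h2 := ((Real.hasDerivAt_sin (s k + t * d k)).comp t h1).mul_const (d k)
    simpa using h2
  -- first order condition
  have hderiv0 : deriv g 0 = 0 := hglocal.deriv_eq_zero
  have hg1zero : g1 0 = 0 := by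
    rw [← (hDg 0).deriv]
    exact hderiv0
  have hfirst : ∑ k : Fin N, Real.sin (s k) * d k = 0 := by
    have : g1 0 = ∑ k : Fin N, Real.sin (s k) * d k := by
      rw [hg1]; simp
    rwa [this] at hg1zero
  refine ⟨hfirst, ?_⟩
  -- second order condition
  by_contra hneg
  push_neg at hneg
  set K : ℝ := ∑ k : Fin N, Real.cos (s k) * d k * d k with hK
  have hKneg : K < 0 := hneg
  have hDK : HasDerivAt g1 K 0 := by
    have := hDg1 0
    simpa using this
  -- g1 is negative just to the right of 0
  have hslope := hasDerivAt_iff_tendsto_slope.mp hDK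
  have hslope_neg : ∀ᶠ t in 𝓝[≠] (0:ℝ), slope g1 0 t < 0 :=
    hslope.eventually (tendsto_id.eventually_lt_const hKneg) |>.mono (fun t h => h)
  have hg1neg : ∀ᶠ t in 𝓝[>] (0:ℝ), g1 t < 0 := by
    have hmono : 𝓝[>] (0:ℝ) ≤ 𝓝[≠] (0:ℝ) := nhdsWithin_mono _ (fun x hx => ne_of_gt hx)
    filter_upwards [hmono hslope_neg, self_mem_nhdsWithin] with t hts ht
    have htpos : (0:ℝ) < t := ht
    have hse : slope g1 0 t = g1 t / t := by
      rw [slope_def_field, hg1zero, sub_zero, sub_zero]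
    rw [hse] at hts
    rcases div_neg_iff.mp hts with ⟨_, hb⟩ | ⟨ha, _⟩
    · linarith
    · exact ha
  rw [eventually_nhdsWithin_iff, Metric.eventually_nhds_iff] at hg1neg
  obtain ⟨ε, hε, hε'⟩ := hg1neg
  have hloc : ∀ᶠ x in 𝓝 (0:ℝ), g 0 ≤ g x := hglocal
  rw [Metric.eventually_nhds_iff] at hloc
  obtain ⟨ε₂, hε₂, hε₂'⟩ := hloc
  set δ : ℝ := min ε ε₂ / 2 with hδ
  have hminpos : 0 < min ε ε₂ := lt_min hε hε₂
  have hδpos : 0 < δ := by positivity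
  have hδε : δ < ε := by
    have h1 := min_le_left ε ε₂
    rw [hδ]; linarith
  have hδε₂ : δ < ε₂ := by
    have h1 := min_le_right ε ε₂
    rw [hδ]; linarith
  have hanti : StrictAntiOn g (Set.Icc 0 δ) := by
    apply strictAntiOn_of_deriv_neg (convex_Icc 0 δ)
    · exact fun x _ => (hDg x).continuousAt.continuousWithinAt
    · intro x hx
      rw [interior_Icc] at hx
      rw [(hDg x).deriv]
      apply hε'
      · rw [Real.dist_eq, sub_zero, abs_of_pos hx.1]
        exact lt_trans hx.2 hδε
      · exact hx.1
  have hlt : g δ < g 0 :=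
    hanti (Set.left_mem_Icc.mpr hδpos.le) (Set.right_mem_Icc.mpr hδpos.le) hδpos
  have hge : g 0 ≤ g δ := by
    apply hε₂'
    rw [Real.dist_eq, sub_zero, abs_of_pos hδpos]
    exact hδε₂
  linarith

lemma sum_sVar (hN3 : 3 ≤ N) (hN : 0 < N) (φ θ : Fin N → ℝ) :
    ∑ k, sVar N hN φ θ k = ∑ k, φ k := by
  have h1 : ∀ k : Fin N, sVar N hN φ θ k = φ k + θ (k + 1) - θ k :=
    fun k => sVar_apply hN3 hN φ θ k
  rw [Finset.sum_congr rfl fun k _ => h1 k]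
  have h2 : ∑ k : Fin N, θ (k + 1) = ∑ k : Fin N, θ k :=
    Fintype.sum_equiv (Equiv.addRight (1 : Fin N)) _ _ (fun k => rfl)
  have h3 : ∑ k : Fin N, (φ k + θ (k + 1) - θ k)
      = (∑ k : Fin N, φ k) + (∑ k : Fin N, θ (k + 1)) - ∑ k : Fin N, θ k := by
    rw [Finset.sum_sub_distrib, Finset.sum_add_distrib]
  rw [h3, h2]; ring

/-- At a local minimum, every `s_k` is congruent to `arcsin (sin s_0)` mod `2π`. -/
lemma key (hN3 : 3 ≤ N) (hN : 0 < N) (φ θ : Fin N → ℝ)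
    (h0 : θ (lastIdx N hN) = 0)
    (hmin : IsLocalMin (FxyFixed N hN φ) θ) :
    ∀ k : Fin N, ∃ z : ℤ,
      sVar N hN φ θ k = Real.arcsin (Real.sin (sVar N hN φ θ 0)) + 2 * π * z := by
  set s : Fin N → ℝ := fun k => sVar N hN φ θ k with hs
  set a : ℝ := Real.sin (s 0) with ha
  -- stationarity: consecutive sines are equal (away from the grounded site)
  have E : ∀ k : Fin N, k + 1 ≠ lastIdx N hN → Real.sin (s k) = Real.sin (s (k + 1)) := by
    intro k hk
    set v : Fin N → ℝ := fun i => if i = k + 1 then (1:ℝ) else 0 with hv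
    have hv0 : v (lastIdx N hN) = 0 := by
      rw [hv]; exact if_neg (fun h => hk h.symm)
    have h1 := (quad_ineq hN3 hN φ θ h0 hmin v hv0).1
    have hterm : ∀ j : Fin N,
        Real.sin (s j) * (v (j + 1) - v j)
          = (if j = k then Real.sin (s j) else 0) - (if j = k + 1 then Real.sin (s j) else 0) := by
      intro j
      have hvj1 : v (j + 1) = if j = k then (1:ℝ) else 0 := by
        simp only [hv, add_left_inj]
      have hvj : v j = if j = k + 1 then (1:ℝ) else 0 := rfl
      rw [hvj1, hvj]
      by_cases h : j = k
      · by_cases h' : j = k + 1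
        · rw [if_pos h, if_pos h', if_pos h, if_pos h']; ring
        · rw [if_pos h, if_neg h', if_pos h, if_neg h']; ring
      · by_cases h' : j = k + 1
        · rw [if_neg h, if_pos h', if_neg h, if_pos h']; ring
        · rw [if_neg h, if_neg h', if_neg h, if_neg h']; ring
    rw [Finset.sum_congr rfl fun j _ => hterm j, Finset.sum_sub_distrib,
      Finset.sum_ite_eq' Finset.univ k (fun j => Real.sin (s j)),
      Finset.sum_ite_eq' Finset.univ (k + 1) (fun j => Real.sin (s j))] at h1
    simp only [Finset.mem_univ, if_true] at h1
    linarith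
  -- all sines are equal to `a`
  have hsin : ∀ k : Fin N, Real.sin (s k) = a := by
    have H : ∀ j : ℕ, ∀ hj : j < N, Real.sin (s ⟨j, hj⟩) = a := by
      intro j
      induction j with
      | zero =>
        intro hj
        have h00 : (⟨0, hj⟩ : Fin N) = 0 := by ext; simp
        rw [h00, ha]
      | succ j ih =>
        intro hj
        by_cases hcase : j + 1 = N - 1
        · -- the target is `lastIdx`; link it to `0` through the wrap-around edge
          have hlast : (⟨j + 1, hj⟩ : Fin N) = lastIdx N hN := by
            ext; simp [lastIdx, hcase]
          have hne : lastIdx N hN + 1 ≠ lastIdx N hN := by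
            rw [lastIdx_add_one hN3 hN]
            intro h
            have := congrArg Fin.val h
            simp [lastIdx] at this
            omega
          have := E (lastIdx N hN) hne
          rw [lastIdx_add_one hN3 hN] at this
          rw [hlast, this, ha]
        · have hjlt : j + 1 < N - 1 := by omega
          have hjN : j < N := by omega
          have hne : (⟨j, hjN⟩ : Fin N) + 1 ≠ lastIdx N hN := by
            rw [fin_mk_add_one hN3 hj]
            intro h
            have := congrArg Fin.val h
            simp [lastIdx] at this
            omega
          have := E ⟨j, hjN⟩ hne
          rw [fin_mk_add_one hN3 hj] at this
          rw [← this]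
          exact ih hjN
    intro k
    have := H (k : ℕ) k.isLt
    simpa using this
  -- all cosines are nonnegative
  have hcos : ∀ k : Fin N, 0 ≤ Real.cos (s k) := by
    by_contra hneg
    push_neg at hneg
    obtain ⟨b, hb⟩ := hneg
    have habs : ∀ k : Fin N, Real.cos (s k) = Real.cos (s b) ∨
        Real.cos (s k) = -Real.cos (s b) := by
      intro k
      have e1 := Real.sin_sq_add_cos_sq (s k)
      have e2 := Real.sin_sq_add_cos_sq (s b)
      rw [hsin k] at e1
      rw [hsin b] at e2
      have hsq : (Real.cos (s k))^2 = (Real.cos (s b))^2 := by linarith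
      have habs' : |Real.cos (s k)| = |Real.cos (s b)| := by
        rw [← Real.sqrt_sq_eq_abs, ← Real.sqrt_sq_eq_abs, hsq]
      exact abs_eq_abs.mp habs'
    by_cases hone : ∃ b' : Fin N, b' ≠ b ∧ Real.cos (s b') < 0
    · -- two negative cosines: use the difference of two indicators
      obtain ⟨b', hb'ne, hb'⟩ := hone
      have hbb' : Real.cos (s b') = Real.cos (s b) := by
        rcases habs b' with h | h
        · exact h
        · linarith
      set Δ : Fin N → ℝ := fun k => (if k = b then (1:ℝ) else 0) - (if k = b' then 1 else 0)
        with hΔ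
      have hΔsum : ∑ k, Δ k = 0 := by
        rw [hΔ]
        rw [Finset.sum_sub_distrib,
          Finset.sum_ite_eq' Finset.univ b (fun _ => (1:ℝ)),
          Finset.sum_ite_eq' Finset.univ b' (fun _ => (1:ℝ))]
        simp
      obtain ⟨v, hv0, hvd⟩ := exists_v hN3 hN Δ hΔsum
      have hq := (quad_ineq hN3 hN φ θ h0 hmin v hv0).2
      rw [Finset.sum_congr rfl fun k _ => by rw [hvd k]] at hq
      have hsub : ∑ k : Fin N, Real.cos (s k) * Δ k * Δ k
          = ∑ k ∈ ({b, b'} : Finset (Fin N)), Real.cos (s k) * Δ k * Δ k := by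
        refine (Finset.sum_subset (Finset.subset_univ _) fun x _ hx => ?_).symm
        have hxb : x ≠ b := fun h => hx (by simp [h])
        have hxb' : x ≠ b' := fun h => hx (by simp [h])
        rw [hΔ]
        simp [hxb, hxb']
      rw [hsub, Finset.sum_pair (Ne.symm hb'ne)] at hq
      have hΔb : Δ b = 1 := by rw [hΔ]; simp [Ne.symm hb'ne]
      have hΔb' : Δ b' = -1 := by rw [hΔ]; simp [hb'ne]
      rw [hΔb, hΔb', hbb'] at hq
      nlinarith
    · -- exactly one negative cosine
      push_neg at hone
      have hpos : ∀ k : Fin N, k ≠ b → Real.cos (s k) = -Real.cos (s b) := by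
        intro k hk
        rcases habs k with h | h
        · have := hone k hk
          linarith
        · exact h
      set Δ : Fin N → ℝ := fun k => (if k = b then (N:ℝ) else 0) - 1 with hΔ
      have hΔsum : ∑ k, Δ k = 0 := by
        rw [hΔ, Finset.sum_sub_distrib,
          Finset.sum_ite_eq' Finset.univ b (fun _ => (N:ℝ))]
        simp [Finset.card_univ]
      obtain ⟨v, hv0, hvd⟩ := exists_v hN3 hN Δ hΔsum
      have hq := (quad_ineq hN3 hN φ θ h0 hmin v hv0).2
      rw [Finset.sum_congr rfl fun k _ => by rw [hvd k]] at hq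
      have hsplit : ∑ k : Fin N, Real.cos (s k) * Δ k * Δ k
          = (∑ k ∈ Finset.univ \ {b}, Real.cos (s k) * Δ k * Δ k)
            + Real.cos (s b) * Δ b * Δ b :=
        (Finset.sum_eq_sum_sdiff_singleton_add (Finset.mem_univ b) _)
      have hterm2 : ∀ k ∈ Finset.univ \ {b}, Real.cos (s k) * Δ k * Δ k
          = -Real.cos (s b) := by
        intro k hk
        have hkb : k ≠ b := by
          simp only [Finset.mem_sdiff, Finset.mem_singleton] at hk
          exact hk.2
        have hΔk : Δ k = -1 := by rw [hΔ]; simp [hkb]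
        rw [hΔk, hpos k hkb]; ring
      have hconst : ∑ k ∈ Finset.univ \ {b}, Real.cos (s k) * Δ k * Δ k
          = ((N - 1 : ℕ) : ℝ) * (-Real.cos (s b)) := by
        rw [Finset.sum_congr rfl hterm2, Finset.sum_const, Finset.card_univ_diff]
        simp [Finset.card_univ, nsmul_eq_mul]
      have hΔb : Δ b = (N:ℝ) - 1 := by rw [hΔ]; simp
      rw [hsplit, hconst, hΔb] at hq
      have hNcast : ((N - 1 : ℕ) : ℝ) = (N:ℝ) - 1 := by
        push_cast [Nat.cast_sub (by omega : 1 ≤ N)]; ring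
      rw [hNcast] at hq
      have hN3' : (3:ℝ) ≤ (N:ℝ) := by exact_mod_cast hN3
      have hc : 0 < -Real.cos (s b) := by linarith
      nlinarith [mul_pos hc (show (0:ℝ) < ((N:ℝ) - 1) * ((N:ℝ) - 2) by nlinarith)]
  -- conclude: each `s k` is `arcsin a` mod `2π`
  intro k
  have ha1 : -1 ≤ a := Real.neg_one_le_sin (s 0)
  have ha2 : a ≤ 1 := Real.sin_le_one (s 0)
  set σ : ℝ := Real.arcsin a with hσ
  have hsinσ : Real.sin σ = a := Real.sin_arcsin ha1 ha2
  have hcosσ : Real.cos σ = Real.sqrt (1 - a^2) := Real.cos_arcsin a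
  have h1a : 0 ≤ 1 - a^2 := by nlinarith
  have hcosk : Real.cos (s k) = Real.sqrt (1 - a^2) := by
    have e1 := Real.sin_sq_add_cos_sq (s k)
    rw [hsin k] at e1
    have : (Real.cos (s k))^2 = 1 - a^2 := by linarith
    rw [← this, Real.sqrt_sq (hcos k)]
  have honecos : Real.cos (s k - σ) = 1 := by
    rw [Real.cos_sub, hcosk, hcosσ, hsin k, hsinσ, Real.mul_self_sqrt h1a]
    ring
  obtain ⟨n, hn⟩ := (Real.cos_eq_one_iff _).mp honecos
  exact ⟨n, by rw [hσ, ha, hs] at *; linarith⟩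


end StmtFive

/-- for odd `N ≥ 3`, the number of local minima of `F_φ`
(with `θ_N = 0` fixed) whose free coordinates lie in the fundamental domain
`(-π, π]` is at most `N`. -/
theorem stmt5 (N : ℕ) (hN : 3 ≤ N) (hodd : Odd N) (φ : Fin N → ℝ) :
    let S : Set (Fin N → ℝ) :=
      {θ | θ (lastIdx N (by omega)) = 0 ∧
        (∀ k : Fin N, (k : ℕ) < N - 1 → θ k ∈ Set.Ioc (-π) π) ∧
        IsLocalMin (FxyFixed N (by omega) φ) θ}
    S.Finite ∧ S.ncard ≤ N := by
  intro S
  haveI : NeZero N := ⟨by omega⟩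
  have hN0 : (0:ℕ) < N := by omega
  have hpi := Real.pi_pos
  set Φ : ℝ := ∑ k, φ k with hΦ
  -- the "invariant" assigned to a local minimum
  let f : (Fin N → ℝ) → ℝ := fun θ => Real.arcsin (Real.sin (sVar N hN0 φ θ 0))
  -- injectivity of `f` on `S`
  have hinj : S.InjOn f := by
    intro θ hθ θ' hθ' hff
    obtain ⟨h0, hdom, hmin⟩ := hθ
    obtain ⟨h0', hdom', hmin'⟩ := hθ'
    have h0a : θ (lastIdx N hN0) = 0 := h0
    have h0a' : θ' (lastIdx N hN0) = 0 := h0'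
    have hz := key hN hN0 φ θ h0a hmin
    have hz' := key hN hN0 φ θ' h0a' hmin'
    have hffβ : Real.arcsin (Real.sin (sVar N hN0 φ θ 0))
        = Real.arcsin (Real.sin (sVar N hN0 φ θ' 0)) := hff
    have Hdiff : ∀ j : ℕ, ∀ hj : j < N, ∃ z : ℤ, θ ⟨j,hj⟩ - θ' ⟨j,hj⟩ = 2*π*z := by
      intro j
      induction j with
      | zero =>
        intro hj
        obtain ⟨z, hzeq⟩ := hz (lastIdx N hN0)
        obtain ⟨z', hzeq'⟩ := hz' (lastIdx N hN0)
        rw [sVar_apply hN hN0 φ θ (lastIdx N hN0), lastIdx_add_one hN hN0] at hzeq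
        rw [sVar_apply hN hN0 φ θ' (lastIdx N hN0), lastIdx_add_one hN hN0] at hzeq'
        refine ⟨z - z', ?_⟩
        have h00 : (⟨0,hj⟩ : Fin N) = 0 := by ext; simp
        rw [h00]
        push_cast
        rw [h0a] at hzeq
        rw [h0a'] at hzeq'
        linarith [hffβ]
      | succ j ih =>
        intro hj
        have hjN : j < N := by omega
        obtain ⟨w, hw⟩ := ih hjN
        obtain ⟨z, hzeq⟩ := hz ⟨j, hjN⟩
        obtain ⟨z', hzeq'⟩ := hz' ⟨j, hjN⟩
        rw [sVar_apply hN hN0 φ θ ⟨j, hjN⟩, fin_mk_add_one hN hj] at hzeq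
        rw [sVar_apply hN hN0 φ θ' ⟨j, hjN⟩, fin_mk_add_one hN hj] at hzeq'
        refine ⟨w + (z - z'), ?_⟩
        push_cast
        linarith [hffβ, hw]
    funext j
    rcases lt_or_ge ((j:ℕ)) (N-1) with hjlt | hjge
    · have hje : (⟨(j:ℕ), j.isLt⟩ : Fin N) = j := by ext; rfl
      obtain ⟨z, hzj⟩ := Hdiff (j:ℕ) j.isLt
      rw [hje] at hzj
      obtain ⟨hd1, hd2⟩ := hdom j hjlt
      obtain ⟨hd1', hd2'⟩ := hdom' j hjlt
      have hlt : (z:ℝ) < 1 := by nlinarith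
      have hgt : (-1:ℝ) < (z:ℝ) := by nlinarith
      have hz0 : z = 0 := by
        have h1 : (-1:ℤ) < z := by exact_mod_cast hgt
        have h2 : z < 1 := by exact_mod_cast hlt
        omega
      rw [hz0] at hzj
      push_cast at hzj
      linarith
    · have hjl : j = lastIdx N hN0 := by
        ext
        simp only [lastIdx]
        omega
      rw [hjl, h0a, h0a']
  -- the image of `f` lies in an explicit finite set of size at most `N`
  set lo : ℤ := ⌈(Φ - N*(π/2))/(2*π)⌉ with hlo
  set hi : ℤ := ⌊(Φ + N*(π/2))/(2*π)⌋ with hhi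
  set T : Finset ℝ := (Finset.Icc lo hi).image (fun M : ℤ => (Φ - 2*π*M)/N) with hT
  have himg : f '' S ⊆ ↑T := by
    rintro x ⟨θ, hθ, rfl⟩
    obtain ⟨h0, hdom, hmin⟩ := hθ
    have h0a : θ (lastIdx N hN0) = 0 := h0
    have hz := key hN hN0 φ θ h0a hmin
    choose m hm using hz
    set σ : ℝ := Real.arcsin (Real.sin (sVar N hN0 φ θ 0)) with hσ
    set Z : ℤ := ∑ k, m k with hZ
    have hsum := sum_sVar hN hN0 φ θ
    have hZcast : ((Z:ℤ):ℝ) = ∑ k : Fin N, ((m k : ℤ):ℝ) := by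
      rw [hZ]; push_cast; rfl
    have hsum2 : ∑ k, sVar N hN0 φ θ k = N * σ + 2*π*(Z:ℝ) := by
      rw [Finset.sum_congr rfl fun k _ => hm k, Finset.sum_add_distrib,
        Finset.sum_const, Finset.card_univ, ← Finset.mul_sum, hZcast]
      simp [nsmul_eq_mul]
    have hEq : (N:ℝ) * σ + 2*π*(Z:ℝ) = Φ := by rw [← hsum2, hsum]
    have hσlb : -(π/2) ≤ σ := Real.neg_pi_div_two_le_arcsin _
    have hσub : σ ≤ π/2 := Real.arcsin_le_pi_div_two _
    have hNcast : (0:ℝ) < (N:ℝ) := by exact_mod_cast hN0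
    have hZlb : lo ≤ Z := by
      rw [hlo]
      apply Int.ceil_le.mpr
      rw [div_le_iff₀ (by linarith)]
      nlinarith
    have hZub : Z ≤ hi := by
      rw [hhi]
      apply Int.le_floor.mpr
      rw [le_div_iff₀ (by linarith)]
      nlinarith
    simp only [hT, Finset.coe_image, Set.mem_image, Finset.mem_coe, Finset.mem_Icc]
    refine ⟨Z, ⟨hZlb, hZub⟩, ?_⟩
    show (Φ - 2*π*(Z:ℝ))/(N:ℝ) = σ
    rw [div_eq_iff (by linarith : (N:ℝ) ≠ 0)]
    linarith
  have hTfin : (↑T : Set ℝ).Finite := T.finite_toSet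
  have hSfin : S.Finite := Set.Finite.of_finite_image (hTfin.subset himg) hinj
  refine ⟨hSfin, ?_⟩
  calc S.ncard = (f '' S).ncard := (Set.ncard_image_of_injOn hinj).symm
    _ ≤ T.card := by
        have h := Set.ncard_le_ncard himg hTfin
        rwa [Set.ncard_coe_finset] at h
    _ ≤ (Finset.Icc lo hi).card := Finset.card_image_le
    _ = (hi + 1 - lo).toNat := Int.card_Icc lo hi
    _ ≤ N := by
        rw [Int.toNat_le]
        have hfl : (hi:ℝ) ≤ (Φ + N*(π/2))/(2*π) := Int.floor_le _
        have hcl : (Φ - N*(π/2))/(2*π) ≤ (lo:ℝ) := Int.le_ceil _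
        have hd : (Φ + N*(π/2))/(2*π) - (Φ - N*(π/2))/(2*π) = N/2 := by
          field_simp
          ring
        have hN3' : (3:ℝ) ≤ (N:ℝ) := by exact_mod_cast hN
        have hfin : (hi:ℝ) + 1 - lo ≤ (N:ℝ) := by linarith
        exact_mod_cast hfin
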